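/- In the front-door structural causal model, Y is conditionally independent of T given the pair (Z, U): for all values z of Z and u of U with P(Z = z, U = u) > 0, all values t of T, and all values y of Y, P(Y = y, T = t | Z = z, U = u) = P(Y = y | Z = z, U = u) · P(T = t | Z = z, U = u). -/

import Mathlib

open MeasureTheory

/-- Conditional probability `P(A | B) = P(A ∩ B) / P(B)`. -/
noncomputable def condP {Ω : Type*} [MeasurableSpace Ω] (μ : Measure Ω)
    (A B : Set Ω) : ENNReal :=
  μ (A ∩ B) / μ B


/-- **Conditional independence `Y ⫫ T | (Z, U)` in the front-door SCM.**
For all values `z` of `Z` and `u` of `U` with `P(Z = z, U = u) > 0`, all values `t`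
of `T` and all values `y` of `Y`,
`P(Y = y, T = t | Z = z, U = u) = P(Y = y | Z = z, U = u) · P(T = t | Z = z, U = u)`. -/
theorem frontdoor_Y_indep_T_given_Z_U
    {Ω 𝒰 𝒯 𝒵 𝒴 ℰT ℰZ ℰY : Type*}
    [MeasurableSpace Ω] [MeasurableSpace 𝒰] [MeasurableSpace 𝒯] [MeasurableSpace 𝒵]
    [MeasurableSpace 𝒴] [MeasurableSpace ℰT] [MeasurableSpace ℰZ] [MeasurableSpace ℰY]
    [Fintype 𝒰] [Nonempty 𝒰] [MeasurableSingletonClass 𝒰]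
    [Fintype 𝒯] [Nonempty 𝒯] [MeasurableSingletonClass 𝒯]
    [Fintype 𝒵] [Nonempty 𝒵] [MeasurableSingletonClass 𝒵]
    [Fintype 𝒴] [Nonempty 𝒴] [MeasurableSingletonClass 𝒴]
    (μ : Measure Ω) [IsProbabilityMeasure μ]
    (U : Ω → 𝒰) (ET : Ω → ℰT) (EZ : Ω → ℰZ) (EY : Ω → ℰY)
    (hU : Measurable U) (hET : Measurable ET) (hEZ : Measurable EZ) (hEY : Measurable EY)
    (fT : 𝒰 × ℰT → 𝒯) (fZ : 𝒯 × ℰZ → 𝒵) (fY : 𝒵 × 𝒰 × ℰY → 𝒴)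
    (hfT : Measurable fT) (hfZ : Measurable fZ) (hfY : Measurable fY)
    -- joint independence of U, E_T, E_Z, E_Y
    (hIndep : ∀ (A : Set 𝒰) (B : Set ℰT) (C : Set ℰZ) (D : Set ℰY),
      MeasurableSet A → MeasurableSet B → MeasurableSet C → MeasurableSet D →
      μ (U ⁻¹' A ∩ ET ⁻¹' B ∩ EZ ⁻¹' C ∩ EY ⁻¹' D)
        = μ (U ⁻¹' A) * μ (ET ⁻¹' B) * μ (EZ ⁻¹' C) * μ (EY ⁻¹' D))
    -- structural equations
    (T : Ω → 𝒯) (Z : Ω → 𝒵) (Y : Ω → 𝒴)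
    (hT : ∀ ω, T ω = fT (U ω, ET ω))
    (hZ : ∀ ω, Z ω = fZ (T ω, EZ ω))
    (hY : ∀ ω, Y ω = fY (Z ω, U ω, EY ω))
    (z : 𝒵) (u : 𝒰) (hzu : 0 < μ {ω | Z ω = z ∧ U ω = u}) (t : 𝒯) (y : 𝒴) :
    condP μ {ω | Y ω = y ∧ T ω = t} {ω | Z ω = z ∧ U ω = u}
      = condP μ {ω | Y ω = y} {ω | Z ω = z ∧ U ω = u}
          * condP μ {ω | T ω = t} {ω | Z ω = z ∧ U ω = u} := by
  classical
  set S : Set ℰY := (fun e => fY (z, u, e)) ⁻¹' {y} with hSdef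
  have hSm : MeasurableSet S :=
    (hfY.comp (measurable_const.prodMk (measurable_const.prodMk measurable_id)))
      (measurableSet_singleton y)
  set A : 𝒯 → Set Ω := fun t' =>
    U ⁻¹' {u} ∩ ET ⁻¹' ((fun b => fT (u, b)) ⁻¹' {t'})
      ∩ EZ ⁻¹' ((fun c => fZ (t', c)) ⁻¹' {z}) with hAdef
  have hBm : ∀ t', MeasurableSet ((fun b => fT (u, b)) ⁻¹' ({t'} : Set 𝒯)) := fun t' =>
    (hfT.comp (measurable_const.prodMk measurable_id)) (measurableSet_singleton t')
  have hCm : ∀ t', MeasurableSet ((fun c => fZ (t', c)) ⁻¹' ({z} : Set 𝒵)) := fun t' =>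
    (hfZ.comp (measurable_const.prodMk measurable_id)) (measurableSet_singleton z)
  have hAm : ∀ t', MeasurableSet (A t') := fun t' =>
    ((hU (measurableSet_singleton u)).inter (hET (hBm t'))).inter (hEZ (hCm t'))
  -- key independence fact
  have hkey : ∀ t' (D : Set ℰY), MeasurableSet D →
      μ (A t' ∩ EY ⁻¹' D) = μ (A t') * μ (EY ⁻¹' D) := by
    intro t' D hD
    have h1 := hIndep {u} _ _ D (measurableSet_singleton u) (hBm t') (hCm t') hD
    have h2 := hIndep {u} _ _ Set.univ (measurableSet_singleton u) (hBm t') (hCm t')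
      MeasurableSet.univ
    simp only [Set.preimage_univ, Set.inter_univ, measure_univ, mul_one] at h2
    rw [hAdef]
    simp only []
    rw [h1, ← h2]
  -- set identities
  have hAeq : ∀ t', A t' = {ω | T ω = t' ∧ Z ω = z ∧ U ω = u} := by
    intro t'
    ext ω
    simp only [hAdef, Set.mem_inter_iff, Set.mem_preimage, Set.mem_singleton_iff,
      Set.mem_setOf_eq]
    constructor
    · rintro ⟨⟨hu', ht'⟩, hz'⟩
      have hTω : T ω = t' := by rw [hT, hu']; exact ht'
      exact ⟨hTω, by rw [hZ, hTω]; exact hz', hu'⟩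
    · rintro ⟨hTω, hZω, hu'⟩
      refine ⟨⟨hu', ?_⟩, ?_⟩
      · rw [← hu', ← hT]; exact hTω
      · rw [← hTω, ← hZ]; exact hZω
  have hZU : {ω | Z ω = z ∧ U ω = u} = ⋃ t', A t' := by
    ext ω
    simp only [Set.mem_iUnion, hAeq, Set.mem_setOf_eq]
    constructor
    · rintro ⟨hz', hu'⟩; exact ⟨T ω, rfl, hz', hu'⟩
    · rintro ⟨t', _, hz', hu'⟩; exact ⟨hz', hu'⟩
  have hdis : Pairwise (Function.onFun Disjoint A) := by
    intro t1 t2 hne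
    simp only [Function.onFun, Set.disjoint_left, hAeq, Set.mem_setOf_eq]
    rintro ω ⟨h1, -⟩ ⟨h2, -⟩
    exact hne (h1 ▸ h2 ▸ rfl)
  have hYiff : ∀ ω, Z ω = z → U ω = u → (Y ω = y ↔ EY ω ∈ S) := by
    intro ω hz' hu'
    rw [hY, hz', hu']
    simp [hSdef]
  -- measure computations
  have hsum : ∀ D : Set ℰY, MeasurableSet D →
      μ ({ω | Z ω = z ∧ U ω = u} ∩ EY ⁻¹' D)
        = μ {ω | Z ω = z ∧ U ω = u} * μ (EY ⁻¹' D) := by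
    intro D hD
    rw [hZU, Set.iUnion_inter]
    rw [measure_iUnion (fun i j hij => (hdis hij).mono Set.inter_subset_left
      Set.inter_subset_left) (fun t' => (hAm t').inter (hEY hD))]
    rw [measure_iUnion hdis hAm]
    rw [tsum_fintype, tsum_fintype, Finset.sum_mul]
    exact Finset.sum_congr rfl fun t' _ => hkey t' D hD
  have hset1 : {ω | Y ω = y ∧ T ω = t} ∩ {ω | Z ω = z ∧ U ω = u} = A t ∩ EY ⁻¹' S := by
    ext ω
    simp only [Set.mem_inter_iff, Set.mem_setOf_eq, hAeq, Set.mem_preimage]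
    constructor
    · rintro ⟨⟨hy', ht'⟩, hz', hu'⟩
      exact ⟨⟨ht', hz', hu'⟩, (hYiff ω hz' hu').1 hy'⟩
    · rintro ⟨⟨ht', hz', hu'⟩, hs⟩
      exact ⟨⟨(hYiff ω hz' hu').2 hs, ht'⟩, hz', hu'⟩
  have hset2 : {ω | Y ω = y} ∩ {ω | Z ω = z ∧ U ω = u}
      = {ω | Z ω = z ∧ U ω = u} ∩ EY ⁻¹' S := by
    ext ω
    simp only [Set.mem_inter_iff, Set.mem_setOf_eq, Set.mem_preimage]
    constructor
    · rintro ⟨hy', hz', hu'⟩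
      exact ⟨⟨hz', hu'⟩, (hYiff ω hz' hu').1 hy'⟩
    · rintro ⟨⟨hz', hu'⟩, hs⟩
      exact ⟨(hYiff ω hz' hu').2 hs, hz', hu'⟩
  have hset3 : {ω | T ω = t} ∩ {ω | Z ω = z ∧ U ω = u} = A t := by
    rw [hAeq]
    ext ω
    simp only [Set.mem_inter_iff, Set.mem_setOf_eq]
  -- final algebra
  have hP0 : μ {ω | Z ω = z ∧ U ω = u} ≠ 0 := hzu.ne'
  have hPtop : μ {ω | Z ω = z ∧ U ω = u} ≠ ⊤ := measure_ne_top μ _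
  rw [condP, condP, condP, hset1, hset2, hset3, hkey t S hSm, hsum S hSm]
  have hPP : μ {ω | Z ω = z ∧ U ω = u} * μ (EY ⁻¹' S) / μ {ω | Z ω = z ∧ U ω = u}
      = μ (EY ⁻¹' S) := by
    rw [mul_div_assoc]; exact ENNReal.mul_div_cancel hP0 hPtop
  rw [hPP, div_eq_mul_inv, div_eq_mul_inv]
  ring
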